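/- Let (s_n)_{n≥1} ⊆ (0,1) satisfy s_2 < 1 - s_1/(1 - s_1) and s_n ≤ s_{n-2}/2 - 2·s_{n-1} for all n ≥ 3, and define c_n := 1 - s_n for n odd and c_n := s_n for n even, with a_n := 1 - c_n. Then for every N ≥ 3 and every n with 1 ≤ n ≤ N-2, writing B := a_{2N}·c_{2N-1}, one has (1 - B·c_{2n+3})·a_{2n+2}·c_{2n+1} < B·c_{2n+1}·(B - B²·c_{2n+3} - a_{2n+3}·c_{2n+2}). -/
import Mathlib

/-- Key purely arithmetic inequality. -/
lemma stmt17_key (B t u r : ℝ) (hB0 : 0 < B) (hB1 : B < 1) (ht : 0 < t)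
    (hk : 1 - B < u / 2 - t) (hr : 0 < r) :
    (1 - B * (1 - t)) * ((1 - u) * r) <
      B * r * (B - B ^ 2 * (1 - t) - t * u) := by
  have hfac : (1 - B * (1 - t)) * ((1 - u) * r) - B * r * (B - B ^ 2 * (1 - t) - t * u)
      = r * (1 - B) * ((1 + B) * (1 - B + B * t) - u) := by ring
  have hbr : (1 + B) * (1 - B + B * t) - u < 0 := by
    nlinarith [sq_nonneg (1 - B), mul_pos (sub_pos.2 hB1) ht]
  have h1B : (0 : ℝ) < 1 - B := by linarith
  have := mul_neg_of_pos_of_neg (mul_pos hr h1B) hbr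
  linarith [hfac]

theorem stmt17 (s c a : ℕ → ℝ)
    (hs : ∀ n, 1 ≤ n → s n ∈ Set.Ioo (0 : ℝ) 1)
    (h1 : s 2 < 1 - s 1 / (1 - s 1))
    (h2 : ∀ n, 3 ≤ n → s n ≤ s (n - 2) / 2 - 2 * s (n - 1))
    (hcodd : ∀ n, 1 ≤ n → Odd n → c n = 1 - s n)
    (hceven : ∀ n, 1 ≤ n → Even n → c n = s n)
    (ha : ∀ n, a n = 1 - c n) :
    ∀ N n : ℕ, 3 ≤ N → 1 ≤ n → n ≤ N - 2 →
      (1 - a (2 * N) * c (2 * N - 1) * c (2 * n + 3)) * (a (2 * n + 2) * c (2 * n + 1)) <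
        a (2 * N) * c (2 * N - 1) * c (2 * n + 1) *
          (a (2 * N) * c (2 * N - 1) - (a (2 * N) * c (2 * N - 1)) ^ 2 * c (2 * n + 3)
            - a (2 * n + 3) * c (2 * n + 2)) := by
  -- one step of the recurrence
  have step : ∀ m : ℕ, 1 ≤ m → s (m + 1) + s (m + 2) ≤ s m / 2 - s (m + 1) := by
    intro m hm
    have h := h2 (m + 2) (by omega)
    have e1 : m + 2 - 2 = m := by omega
    have e2 : m + 2 - 1 = m + 1 := by omega
    rw [e1, e2] at h
    linarith
  -- monotonicity of T m = s m + s (m+1)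
  have mono : ∀ k m : ℕ, 1 ≤ m → s (m + k) + s (m + k + 1) ≤ s m + s (m + 1) := by
    intro k
    induction k with
    | zero => intro m hm; simp
    | succ k ih =>
      intro m hm
      have h1' := ih m hm
      have h2' := step (m + k) (by omega)
      have hp := (hs (m + k) (by omega)).1
      have hp2 := (hs (m + k + 1) (by omega)).1
      have e : m + (k + 1) = m + k + 1 := by omega
      rw [e]
      have e2 : m + k + 1 + 1 = m + k + 2 := by omega
      rw [e2]
      linarith
  intro N n hN hn hnN
  obtain ⟨M, rfl⟩ : ∃ M, N = M + 3 := ⟨N - 3, by omega⟩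
  have hnM : n ≤ M + 1 := by omega
  -- index simplifications
  have e1 : 2 * (M + 3) - 1 = 2 * M + 5 := by omega
  have e2 : 2 * (M + 3) = 2 * M + 6 := by omega
  rw [e1, e2]
  -- rewrite a, c in terms of s
  have hc1 : c (2 * M + 5) = 1 - s (2 * M + 5) := hcodd _ (by omega) ⟨M + 2, by omega⟩
  have hc2 : c (2 * M + 6) = s (2 * M + 6) := hceven _ (by omega) ⟨M + 3, by omega⟩
  have hc3 : c (2 * n + 3) = 1 - s (2 * n + 3) := hcodd _ (by omega) ⟨n + 1, by omega⟩
  have hc4 : c (2 * n + 1) = 1 - s (2 * n + 1) := hcodd _ (by omega) ⟨n, by omega⟩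
  have hc5 : c (2 * n + 2) = s (2 * n + 2) := hceven _ (by omega) ⟨n + 1, by omega⟩
  have ha1 : a (2 * M + 6) = 1 - s (2 * M + 6) := by rw [ha, hc2]
  have ha2 : a (2 * n + 2) = 1 - s (2 * n + 2) := by rw [ha, hc5]
  have ha3 : a (2 * n + 3) = s (2 * n + 3) := by rw [ha, hc3]; ring
  rw [hc1, hc3, hc4, hc5, ha1, ha2, ha3]
  set p := s (2 * M + 6) with hp
  set q := s (2 * M + 5) with hq
  set t := s (2 * n + 3) with htd
  set u := s (2 * n + 2) with hud
  set r := s (2 * n + 1) with hrd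
  have hpI := hs (2 * M + 6) (by omega)
  have hqI := hs (2 * M + 5) (by omega)
  have htI := hs (2 * n + 3) (by omega)
  have huI := hs (2 * n + 2) (by omega)
  have hrI := hs (2 * n + 1) (by omega)
  have hB0 : 0 < (1 - p) * (1 - q) := mul_pos (by linarith [hpI.2]) (by linarith [hqI.2])
  have hB1 : (1 - p) * (1 - q) < 1 := by nlinarith [hpI.1, hqI.1, hqI.2]
  -- the key bound : 1 - B < u/2 - t
  have hchain : q + p ≤ t + s (2 * n + 4) := by
    obtain ⟨j, hj⟩ : ∃ j, M + 1 = n + j := ⟨M + 1 - n, by omega⟩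
    have := mono (2 * j) (2 * n + 3) (by omega)
    have e3 : 2 * n + 3 + 2 * j = 2 * M + 5 := by omega
    rw [e3] at this
    have e4 : 2 * M + 5 + 1 = 2 * M + 6 := by omega
    have e5 : 2 * n + 3 + 1 = 2 * n + 4 := by omega
    rw [e4, e5] at this
    linarith
  have hstep := step (2 * n + 2) (by omega)
  have e6 : 2 * n + 2 + 1 = 2 * n + 3 := by omega
  have e7 : 2 * n + 2 + 2 = 2 * n + 4 := by omega
  rw [e6, e7] at hstep
  have hs4 := (hs (2 * n + 4) (by omega)).1
  have hk : 1 - (1 - p) * (1 - q) < u / 2 - t := by nlinarith [hpI.1, hqI.1]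
  -- conclude via the key arithmetic lemma
  have := stmt17_key ((1 - p) * (1 - q)) t u (1 - r) hB0 hB1 htI.1 hk (by linarith [hrI.2])
  linarith [this]
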